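/- Let d ≥ 2 be an integer and let μ : [0,∞) → [0,∞) be continuously differentiable with |μ(e)| + |μ'(e)| ≤ C(1+e)^{-n₁} for some n₁ > (d+1)/2. Define φ(u) := ∫_{ℝ^{d-1}} μ(u² + |w|²) dw and Υ := sup{ |p| : p ∈ ℝ^d, μ(|p|²) ≠ 0 }. If d ≥ 3, or if d = 2 and μ'(e) ≤ 0 for all e ≥ 0, then: (i) φ is even on ℝ; (ii) φ'(u) ≤ 0 for all u ≥ 0; (iii) if moreover μ(|p|²) > 0 for all |p| < Υ, then φ'(u) < 0 for 0 < u < Υ; and (iv) there is a constant C' with |φ'(u)| ≤ C'|u| for all u ∈ ℝ. -/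

import Mathlib

open MeasureTheory ENNReal

/-- The marginal of `μ(|p|²)` over a hyperplane in `ℝ^d`:
`φ(u) = ∫_{ℝ^{d-1}} μ(u² + |w|²) dw`. -/
noncomputable def phiMarg (d : ℕ) (μ : ℝ → ℝ) (u : ℝ) : ℝ :=
  ∫ w : EuclideanSpace ℝ (Fin (d - 1)), μ (u ^ 2 + ‖w‖ ^ 2)

/-- The maximal particle speed `Υ = sup {|p| : μ(|p|²) ≠ 0}`, as an extended real. -/
noncomputable def maxSpeed (d : ℕ) (μ : ℝ → ℝ) : ℝ≥0∞ :=
  ⨆ (p : EuclideanSpace ℝ (Fin d)) (_ : μ (‖p‖ ^ 2) ≠ 0), ENNReal.ofReal ‖p‖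

open Set Real Filter Topology Metric

lemma myCont {β n : ℝ} : ContinuousOn (fun t : ℝ => t ^ β * (1+t) ^ (-n)) (Ioi 0) := by
  intro t ht
  have h1 : ContinuousAt (fun t : ℝ => t ^ β) t :=
    Real.continuousAt_rpow_const t β (Or.inl (ne_of_gt ht))
  have h2 : ContinuousAt (fun t : ℝ => (1+t) ^ (-n)) t := by
    have : ContinuousAt (fun t : ℝ => t ^ (-n)) (1+t) :=
      Real.continuousAt_rpow_const _ _ (Or.inl (by have := mem_Ioi.mp ht; positivity))
    exact this.comp (continuous_const.add continuous_id).continuousAt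
  exact (h1.mul h2).continuousWithinAt

lemma myInt {β n : ℝ} (hβ : -1 < β) (hn : 0 < n) (hβn : β - n < -1) :
    IntegrableOn (fun t : ℝ => t ^ β * (1+t) ^ (-n)) (Ioi 0) := by
  have hmeas : ∀ s : Set ℝ, s ⊆ Ioi 0 → MeasurableSet s →
      AEStronglyMeasurable (fun t : ℝ => t ^ β * (1+t) ^ (-n)) (volume.restrict s) :=
    fun s hs hms => (myCont.mono hs).aestronglyMeasurable hms
  have h01 : IntegrableOn (fun t : ℝ => t ^ β * (1+t) ^ (-n)) (Ioc 0 1) := by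
    have hint : IntegrableOn (fun t : ℝ => t ^ β) (Ioc (0:ℝ) 1) :=
      (intervalIntegrable_iff_integrableOn_Ioc_of_le zero_le_one).mp
        (intervalIntegral.intervalIntegrable_rpow' hβ)
    refine hint.mono' (hmeas _ Ioc_subset_Ioi_self measurableSet_Ioc) ?_
    filter_upwards [ae_restrict_mem measurableSet_Ioc] with t ht
    have ht0 : (0:ℝ) < t := ht.1
    have hb : (1+t) ^ (-n) ≤ 1 :=
      Real.rpow_le_one_of_one_le_of_nonpos (by linarith) (by linarith)
    have : |t ^ β * (1+t) ^ (-n)| = t ^ β * (1+t) ^ (-n) := by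
      refine abs_of_nonneg (mul_nonneg (rpow_nonneg ht0.le _) (rpow_nonneg (by linarith) _))
    rw [Real.norm_eq_abs, this]
    calc t ^ β * (1+t) ^ (-n) ≤ t ^ β * 1 :=
          mul_le_mul_of_nonneg_left hb (rpow_nonneg ht0.le _)
      _ = t ^ β := mul_one _
  have h1i : IntegrableOn (fun t : ℝ => t ^ β * (1+t) ^ (-n)) (Ioi 1) := by
    have hint : IntegrableOn (fun t : ℝ => t ^ (β - n)) (Ioi (1:ℝ)) :=
      integrableOn_Ioi_rpow_of_lt hβn one_pos
    refine hint.mono' (hmeas _ (Ioi_subset_Ioi zero_le_one) measurableSet_Ioi) ?_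
    filter_upwards [ae_restrict_mem measurableSet_Ioi] with t ht
    have ht0 : (0:ℝ) < t := lt_trans one_pos ht
    have hb : (1+t) ^ (-n) ≤ t ^ (-n) :=
      Real.rpow_le_rpow_of_nonpos ht0 (by linarith) (by linarith)
    rw [Real.norm_eq_abs, abs_of_nonneg (mul_nonneg (rpow_nonneg ht0.le _) (rpow_nonneg (by linarith) _))]
    calc t ^ β * (1+t) ^ (-n) ≤ t ^ β * t ^ (-n) :=
          mul_le_mul_of_nonneg_left hb (rpow_nonneg ht0.le _)
      _ = t ^ (β - n) := by rw [← Real.rpow_add ht0]; ring_nf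
  have : Ioc (0:ℝ) 1 ∪ Ioi 1 = Ioi 0 := Ioc_union_Ioi_eq_Ioi zero_le_one
  rw [← this]
  exact h01.union h1i

lemma myContShift {f : ℝ → ℝ} (hf : Continuous f) {β s : ℝ} :
    ContinuousOn (fun t : ℝ => t ^ β * f (s + t)) (Ioi 0) := by
  intro t ht
  have ht' := mem_Ioi.mp ht
  have h1 : ContinuousAt (fun t : ℝ => t ^ β) t :=
    Real.continuousAt_rpow_const t β (Or.inl (ne_of_gt ht'))
  exact (h1.mul ((hf.comp (continuous_const.add continuous_id)).continuousAt)).continuousWithinAt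

lemma myIntShift {f : ℝ → ℝ} (hf : Continuous f) {C n β : ℝ}
    (hβ : -1 < β) (hn : 0 < n) (hβn : β - n < -1)
    (hbound : ∀ e : ℝ, 0 ≤ e → |f e| ≤ C * (1+e) ^ (-n)) {s : ℝ} (hs : 0 ≤ s) :
    IntegrableOn (fun t : ℝ => t ^ β * f (s + t)) (Ioi 0) := by
  have hC : 0 ≤ C := by
    have := hbound 0 le_rfl
    rw [add_zero, Real.one_rpow] at this
    have h0 : (0:ℝ) ≤ |f 0| := abs_nonneg _
    linarith
  refine (((myInt hβ hn hβn).const_mul C).mono'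
    ((myContShift hf).aestronglyMeasurable measurableSet_Ioi) ?_)
  filter_upwards [ae_restrict_mem measurableSet_Ioi] with t ht
  have ht' := mem_Ioi.mp ht
  have h1 : |f (s + t)| ≤ C * (1 + (s + t)) ^ (-n) := hbound _ (by linarith)
  have h2 : (1 + (s + t)) ^ (-n) ≤ (1 + t) ^ (-n) :=
    Real.rpow_le_rpow_of_nonpos (by linarith) (by linarith) (by linarith)
  rw [Real.norm_eq_abs, abs_mul, abs_of_nonneg (rpow_nonneg ht'.le β)]
  calc t ^ β * |f (s + t)| ≤ t ^ β * (C * (1 + t) ^ (-n)) := by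
        refine mul_le_mul_of_nonneg_left (h1.trans ?_) (rpow_nonneg ht'.le β)
        exact mul_le_mul_of_nonneg_left h2 hC
    _ = C * (t ^ β * (1 + t) ^ (-n)) := by ring

lemma myBoundIntegral {f : ℝ → ℝ} (hf : Continuous f) {C n β : ℝ}
    (hβ : -1 < β) (hn : 0 < n) (hβn : β - n < -1)
    (hbound : ∀ e : ℝ, 0 ≤ e → |f e| ≤ C * (1+e) ^ (-n)) {s : ℝ} (hs : 0 ≤ s) :
    |∫ t in Ioi (0:ℝ), t ^ β * f (s + t)| ≤ C * ∫ t in Ioi (0:ℝ), t ^ β * (1+t) ^ (-n) := by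
  have hC : 0 ≤ C := by
    have := hbound 0 le_rfl
    rw [add_zero, Real.one_rpow] at this
    have h0 : (0:ℝ) ≤ |f 0| := abs_nonneg _
    linarith
  rw [← Real.norm_eq_abs, ← integral_const_mul]
  refine norm_integral_le_of_norm_le ((myInt hβ hn hβn).const_mul C) ?_
  filter_upwards [ae_restrict_mem measurableSet_Ioi] with t ht
  have ht' := mem_Ioi.mp ht
  have h1 : |f (s + t)| ≤ C * (1 + (s + t)) ^ (-n) := hbound _ (by linarith)
  have h2 : (1 + (s + t)) ^ (-n) ≤ (1 + t) ^ (-n) :=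
    Real.rpow_le_rpow_of_nonpos (by linarith) (by linarith) (by linarith)
  rw [Real.norm_eq_abs, abs_mul, abs_of_nonneg (rpow_nonneg ht'.le β)]
  calc t ^ β * |f (s + t)| ≤ t ^ β * (C * (1 + t) ^ (-n)) := by
        refine mul_le_mul_of_nonneg_left (h1.trans ?_) (rpow_nonneg ht'.le β)
        exact mul_le_mul_of_nonneg_left h2 hC
    _ = C * (t ^ β * (1 + t) ^ (-n)) := by ring

lemma myDeriv {μ : ℝ → ℝ} (hμ : ContDiff ℝ 1 μ) {C n β : ℝ}
    (hβ : -1 < β) (hn : 0 < n) (hβn : β - n < -1)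
    (hbμ : ∀ e : ℝ, 0 ≤ e → |μ e| ≤ C * (1+e) ^ (-n))
    (hbμ' : ∀ e : ℝ, 0 ≤ e → |deriv μ e| ≤ C * (1+e) ^ (-n)) {s : ℝ} (hs : 0 < s) :
    HasDerivAt (fun x : ℝ => ∫ t in Ioi (0:ℝ), t ^ β * μ (x + t))
      (∫ t in Ioi (0:ℝ), t ^ β * deriv μ (s + t)) s := by
  have hC : 0 ≤ C := by
    have := hbμ 0 le_rfl
    rw [add_zero, Real.one_rpow] at this
    have h0 : (0:ℝ) ≤ |μ 0| := abs_nonneg _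
    linarith
  have hμc : Continuous μ := hμ.continuous
  have hμ'c : Continuous (deriv μ) := hμ.continuous_deriv le_rfl
  have hder := hasDerivAt_integral_of_dominated_loc_of_deriv_le
    (F := fun (x : ℝ) (t : ℝ) => t ^ β * μ (x + t))
    (F' := fun (x : ℝ) (t : ℝ) => t ^ β * deriv μ (x + t))
    (μ := volume.restrict (Ioi (0:ℝ))) (x₀ := s)
    (bound := fun t => C * (t ^ β * (1+t) ^ (-n)))
    (ball_mem_nhds s (half_pos hs))
    (Eventually.of_forall fun x =>
      (myContShift hμc).aestronglyMeasurable measurableSet_Ioi)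
    (myIntShift hμc hβ hn hβn hbμ hs.le)
    ((myContShift hμ'c).aestronglyMeasurable measurableSet_Ioi)
    ?_ ((myInt hβ hn hβn).const_mul C) ?_
  · exact hder.2
  · filter_upwards [ae_restrict_mem measurableSet_Ioi] with t ht x hx
    have ht' := mem_Ioi.mp ht
    have hx' : s / 2 < x := by
      have := abs_lt.mp (mem_ball_iff_norm.mp hx)
      linarith [this.1]
    have hx0 : 0 ≤ x := by linarith
    have h1 : |deriv μ (x + t)| ≤ C * (1 + (x + t)) ^ (-n) := hbμ' _ (by linarith)
    have h2 : (1 + (x + t)) ^ (-n) ≤ (1 + t) ^ (-n) :=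
      Real.rpow_le_rpow_of_nonpos (by linarith) (by linarith) (by linarith)
    rw [Real.norm_eq_abs, abs_mul, abs_of_nonneg (rpow_nonneg ht'.le β)]
    calc t ^ β * |deriv μ (x + t)| ≤ t ^ β * (C * (1 + t) ^ (-n)) := by
          refine mul_le_mul_of_nonneg_left (h1.trans ?_) (rpow_nonneg ht'.le β)
          exact mul_le_mul_of_nonneg_left h2 hC
      _ = C * (t ^ β * (1 + t) ^ (-n)) := by ring
  · filter_upwards [ae_restrict_mem measurableSet_Ioi] with t ht x hx
    have hd : HasDerivAt (fun x : ℝ => μ (x + t)) (deriv μ (x + t)) x := by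
      have h0 : HasDerivAt μ (deriv μ (x + t)) (x + t) :=
        ((hμ.differentiable one_ne_zero) (x + t)).hasDerivAt
      exact (h0.comp x ((hasDerivAt_id x).add_const t)).congr_deriv (mul_one _)
    exact hd.const_mul _

lemma myTendsto {f : ℝ → ℝ} {C n γ s : ℝ} (hn : 0 < n) (hγ : γ < n)
    (hbound : ∀ e : ℝ, 0 ≤ e → |f e| ≤ C * (1+e) ^ (-n)) (hs : 0 ≤ s) :
    Tendsto (fun t : ℝ => t ^ γ * f (s + t)) atTop (𝓝 0) := by
  have hC : 0 ≤ C := by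
    have := hbound 0 le_rfl
    rw [add_zero, Real.one_rpow] at this
    have h0 : (0:ℝ) ≤ |f 0| := abs_nonneg _
    linarith
  have hlim : Tendsto (fun t : ℝ => C * t ^ (-(n - γ))) atTop (𝓝 0) := by
    have := (tendsto_rpow_neg_atTop (by linarith : 0 < n - γ)).const_mul C
    simpa using this
  refine squeeze_zero_norm' ?_ hlim
  filter_upwards [eventually_ge_atTop 1] with t ht
  have ht0 : (0:ℝ) < t := lt_of_lt_of_le one_pos ht
  have h1 : |f (s + t)| ≤ C * (1 + (s + t)) ^ (-n) := hbound _ (by linarith)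
  have h2 : (1 + (s + t)) ^ (-n) ≤ t ^ (-n) :=
    Real.rpow_le_rpow_of_nonpos ht0 (by linarith) (by linarith)
  rw [Real.norm_eq_abs, abs_mul, abs_of_nonneg (rpow_nonneg ht0.le γ)]
  calc t ^ γ * |f (s + t)| ≤ t ^ γ * (C * t ^ (-n)) := by
        refine mul_le_mul_of_nonneg_left (h1.trans ?_) (rpow_nonneg ht0.le γ)
        exact mul_le_mul_of_nonneg_left h2 hC
    _ = C * (t ^ γ * t ^ (-n)) := by ring
    _ = C * t ^ (-(n - γ)) := by rw [← Real.rpow_add ht0]; ring_nf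

lemma myShiftDeriv {μ : ℝ → ℝ} (hμ : ContDiff ℝ 1 μ) (s x : ℝ) :
    HasDerivAt (fun t : ℝ => μ (s + t)) (deriv μ (s + x)) x := by
  have h0 : HasDerivAt μ (deriv μ (s + x)) (s + x) :=
    ((hμ.differentiable one_ne_zero) (s + x)).hasDerivAt
  exact (h0.comp x ((hasDerivAt_id x).const_add s)).congr_deriv (mul_one _)

-- d = 3 case
lemma myFTC {μ : ℝ → ℝ} (hμ : ContDiff ℝ 1 μ) {C n : ℝ} (hn : 1 < n)
    (hbμ : ∀ e : ℝ, 0 ≤ e → |μ e| ≤ C * (1+e) ^ (-n))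
    (hbμ' : ∀ e : ℝ, 0 ≤ e → |deriv μ e| ≤ C * (1+e) ^ (-n)) {s : ℝ} (hs : 0 ≤ s) :
    (∫ t in Ioi (0:ℝ), deriv μ (s + t)) = -μ s := by
  have hint : IntegrableOn (fun t : ℝ => deriv μ (s + t)) (Ioi 0) := by
    have := myIntShift (hμ.continuous_deriv le_rfl) (β := 0) (by norm_num) (by linarith)
      (by linarith) hbμ' hs
    simpa using this
  have htend : Tendsto (fun t : ℝ => μ (s + t)) atTop (𝓝 0) := by
    have := myTendsto (f := μ) (γ := 0) (by linarith) (by linarith) hbμ hs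
    simpa using this
  have := integral_Ioi_of_hasDerivAt_of_tendsto' (a := 0)
    (fun x _ => myShiftDeriv hμ s x) hint htend
  simpa using this

-- d ≥ 4 case : integration by parts
lemma myIBP {μ : ℝ → ℝ} (hμ : ContDiff ℝ 1 μ) {C n α : ℝ} (hα : 0 < α) (hn : α < n)
    (hαn : α - n < -1)
    (hbμ : ∀ e : ℝ, 0 ≤ e → |μ e| ≤ C * (1+e) ^ (-n))
    (hbμ' : ∀ e : ℝ, 0 ≤ e → |deriv μ e| ≤ C * (1+e) ^ (-n)) {s : ℝ} (hs : 0 ≤ s) :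
    (∫ t in Ioi (0:ℝ), t ^ α * deriv μ (s + t)) =
      -α * ∫ t in Ioi (0:ℝ), t ^ (α - 1) * μ (s + t) := by
  have hn0 : 0 < n := lt_trans hα hn
  have hint1 : IntegrableOn (fun t : ℝ => t ^ (α - 1) * μ (s + t)) (Ioi 0) :=
    myIntShift hμ.continuous (by linarith) hn0 (by linarith) hbμ hs
  have hint2 : IntegrableOn (fun t : ℝ => t ^ α * deriv μ (s + t)) (Ioi 0) :=
    myIntShift (hμ.continuous_deriv le_rfl) (by linarith) hn0 (by linarith) hbμ' hs
  have hint1' : IntegrableOn (fun t : ℝ => α * (t ^ (α - 1) * μ (s + t))) (Ioi 0) :=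
    hint1.const_mul α
  have hcont : ContinuousWithinAt (fun t : ℝ => t ^ α * μ (s + t)) (Ici 0) 0 := by
    refine ContinuousAt.continuousWithinAt ?_
    exact (Real.continuousAt_rpow_const 0 α (Or.inr hα.le)).mul
      ((hμ.continuous.comp (continuous_const.add continuous_id)).continuousAt)
  have hderiv : ∀ x ∈ Ioi (0:ℝ), HasDerivAt (fun t : ℝ => t ^ α * μ (s + t))
      (α * (x ^ (α - 1) * μ (s + x)) + x ^ α * deriv μ (s + x)) x := by
    intro x hx
    have h1 : HasDerivAt (fun t : ℝ => t ^ α) (α * x ^ (α - 1)) x :=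
      Real.hasDerivAt_rpow_const (Or.inl (ne_of_gt (mem_Ioi.mp hx)))
    have := h1.mul (myShiftDeriv hμ s x)
    exact this.congr_deriv (by ring)
  have htend : Tendsto (fun t : ℝ => t ^ α * μ (s + t)) atTop (𝓝 0) :=
    myTendsto hn0 hn hbμ hs
  have key := integral_Ioi_of_hasDerivAt_of_tendsto hcont hderiv
    (hint1'.add hint2) htend
  rw [integral_add hint1' hint2, integral_const_mul] at key
  rw [Real.zero_rpow (ne_of_gt hα), zero_mul, zero_sub, neg_zero] at key
  linarith

lemma myD2neg {μ : ℝ → ℝ} (hμ : ContDiff ℝ 1 μ) {C n β : ℝ}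
    (hβ : -1 < β) (hβ0 : β ≤ 0) (hn : 0 < n) (hβn : β - n < -1)
    (hbμ : ∀ e : ℝ, 0 ≤ e → |μ e| ≤ C * (1+e) ^ (-n))
    (hbμ' : ∀ e : ℝ, 0 ≤ e → |deriv μ e| ≤ C * (1+e) ^ (-n))
    (hμ'neg : ∀ e : ℝ, 0 ≤ e → deriv μ e ≤ 0)
    {s : ℝ} (hs : 0 ≤ s) (hμs : 0 < μ s) :
    (∫ t in Ioi (0:ℝ), t ^ β * deriv μ (s + t)) < 0 := by
  have hμ'c : Continuous (deriv μ) := hμ.continuous_deriv le_rfl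
  -- choose T
  have hlim : Tendsto (fun T : ℝ => C * (1 + (s + T)) ^ (-n)) atTop (𝓝 0) := by
    have h1 : Tendsto (fun T : ℝ => 1 + (s + T)) atTop atTop := by
      apply tendsto_atTop_add_const_left
      apply tendsto_atTop_add_const_left
      exact tendsto_id
    have := ((tendsto_rpow_neg_atTop hn).comp h1).const_mul C
    simpa [Function.comp] using this
  obtain ⟨T, hT⟩ := ((hlim.eventually_lt_const hμs).and (eventually_gt_atTop 0)).exists
  obtain ⟨hTlt, hT0⟩ := hT
  have hμT : μ (s + T) < μ s := by
    have h1 : μ (s + T) ≤ |μ (s + T)| := le_abs_self _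
    have h2 := hbμ (s + T) (by linarith)
    linarith
  have hint : IntegrableOn (fun t : ℝ => t ^ β * deriv μ (s + t)) (Ioi 0) :=
    myIntShift hμ'c hβ hn hβn hbμ' hs
  -- split the integral
  have hsplit : (∫ t in Ioi (0:ℝ), t ^ β * deriv μ (s + t)) =
      (∫ t in Ioc (0:ℝ) T, t ^ β * deriv μ (s + t)) +
      ∫ t in Ioi T, t ^ β * deriv μ (s + t) := by
    rw [← setIntegral_union (Ioc_disjoint_Ioi le_rfl) measurableSet_Ioi
      (hint.mono_set Ioc_subset_Ioi_self)
      (hint.mono_set (Ioi_subset_Ioi hT0.le)),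
      Ioc_union_Ioi_eq_Ioi hT0.le]
  -- tail ≤ 0
  have htail : (∫ t in Ioi T, t ^ β * deriv μ (s + t)) ≤ 0 := by
    refine integral_nonpos_of_ae ?_
    filter_upwards [ae_restrict_mem measurableSet_Ioi] with t ht
    have ht0 : (0:ℝ) < t := lt_trans hT0 (mem_Ioi.mp ht)
    exact mul_nonpos_iff.mpr (Or.inl ⟨rpow_nonneg ht0.le β, hμ'neg _ (by linarith)⟩)
  -- head piece
  have hhead : (∫ t in Ioc (0:ℝ) T, t ^ β * deriv μ (s + t)) ≤
      T ^ β * (μ (s + T) - μ s) := by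
    have hint2 : IntegrableOn (fun t : ℝ => T ^ β * deriv μ (s + t)) (Ioc 0 T) :=
      ((hμ'c.comp (continuous_const.add continuous_id)).integrableOn_Ioc).const_mul _
    have hmono : (∫ t in Ioc (0:ℝ) T, t ^ β * deriv μ (s + t)) ≤
        ∫ t in Ioc (0:ℝ) T, T ^ β * deriv μ (s + t) := by
      refine setIntegral_mono_on (hint.mono_set Ioc_subset_Ioi_self) hint2
        measurableSet_Ioc fun t ht => ?_
      have hTt : T ^ β ≤ t ^ β := Real.rpow_le_rpow_of_nonpos ht.1 ht.2 hβ0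
      exact mul_le_mul_of_nonpos_right hTt (hμ'neg _ (by linarith [ht.1.le]))
    have heq : (∫ t in Ioc (0:ℝ) T, T ^ β * deriv μ (s + t)) =
        T ^ β * (μ (s + T) - μ s) := by
      rw [integral_const_mul, ← intervalIntegral.integral_of_le hT0.le,
        intervalIntegral.integral_eq_sub_of_hasDerivAt
          (fun x _ => myShiftDeriv hμ s x)
          ((hμ'c.comp (continuous_const.add continuous_id)).intervalIntegrable _ _)]
      simp
    linarith
  have hTβ : (0:ℝ) < T ^ β := rpow_pos_of_pos hT0 β
  have : T ^ β * (μ (s + T) - μ s) < 0 := mul_neg_of_pos_of_neg hTβ (by linarith)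
  linarith

lemma myPhiEq (d : ℕ) (hd : 2 ≤ d) (μ : ℝ → ℝ) (u : ℝ) :
    phiMarg d μ u = (((d:ℝ) - 1) *
        (volume (ball (0 : EuclideanSpace ℝ (Fin (d-1))) 1)).toReal * (1/2)) *
      ∫ t in Ioi (0:ℝ), t ^ (((d:ℝ)-3)/2) * μ (u^2 + t) := by
  haveI : Nonempty (Fin (d-1)) := ⟨⟨0, by omega⟩⟩
  haveI : Nontrivial (EuclideanSpace ℝ (Fin (d-1))) := inferInstance
  have hrank : Module.finrank ℝ (EuclideanSpace ℝ (Fin (d-1))) = d - 1 :=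
    finrank_euclideanSpace_fin
  have h1 : phiMarg d μ u =
      (d - 1) • (volume (ball (0 : EuclideanSpace ℝ (Fin (d-1))) 1)).toReal •
        ∫ y in Ioi (0:ℝ), y ^ (d - 1 - 1) • μ (u^2 + y^2) := by
    rw [phiMarg, integral_fun_norm_addHaar volume (fun r => μ (u^2 + r^2)), hrank]
    rfl
  set α : ℝ := ((d:ℝ)-3)/2 with hα
  have h2 : (∫ t in Ioi (0:ℝ), t ^ α * μ (u^2 + t)) =
      2 * ∫ y in Ioi (0:ℝ), y ^ (d - 1 - 1) • μ (u^2 + y^2) := by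
    rw [← integral_comp_rpow_Ioi_of_pos (g := fun t => t ^ α * μ (u^2 + t)) two_pos,
      ← integral_const_mul]
    refine setIntegral_congr_fun measurableSet_Ioi fun x hx => ?_
    have hx' := mem_Ioi.mp hx
    have hx2 : x ^ (2:ℝ) = x ^ (2:ℕ) := by
      rw [← Real.rpow_natCast x 2]; norm_num
    have hxa : (x ^ (2:ℝ)) ^ α = x ^ ((d:ℝ) - 3) := by
      rw [← Real.rpow_mul hx'.le]
      congr 1
      field_simp [hα]
      rw [hα]; ring
    have hcast : ((d - 1 - 1 : ℕ) : ℝ) = (d:ℝ) - 2 := by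
      have : d - 1 - 1 = d - 2 := by omega
      rw [this, Nat.cast_sub hd]; norm_num
    have hxd : x ^ ((d:ℝ) - 2) = x ^ (d - 1 - 1 : ℕ) := by
      rw [← Real.rpow_natCast x (d - 1 - 1), hcast]
    rw [smul_eq_mul, smul_eq_mul, hxa, ← hxd, hx2]
    rw [show ((d:ℝ)-2) = ((2:ℝ)-1) + ((d:ℝ)-3) by ring, Real.rpow_add hx']
    ring
  rw [h1, nsmul_eq_mul, smul_eq_mul]
  have hcast2 : ((d - 1 : ℕ) : ℝ) = (d:ℝ) - 1 := by
    rw [Nat.cast_sub (by omega)]; norm_num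
  rw [hcast2, h2]
  ring

theorem stmt0 (d : ℕ) (hd : 2 ≤ d) (μ : ℝ → ℝ) (C n₁ : ℝ)
    (hμ0 : ∀ e : ℝ, 0 ≤ e → 0 ≤ μ e)
    (hμC1 : ContDiff ℝ 1 μ)
    (hn₁ : ((d : ℝ) + 1) / 2 < n₁)
    (hdecay : ∀ e : ℝ, 0 ≤ e → |μ e| + |deriv μ e| ≤ C * (1 + e) ^ (-n₁))
    (hcase : 3 ≤ d ∨ (d = 2 ∧ ∀ e : ℝ, 0 ≤ e → deriv μ e ≤ 0)) :
    (∀ u : ℝ, phiMarg d μ (-u) = phiMarg d μ u) ∧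
    (∀ u : ℝ, 0 ≤ u → deriv (phiMarg d μ) u ≤ 0) ∧
    ((∀ p : EuclideanSpace ℝ (Fin d), ENNReal.ofReal ‖p‖ < maxSpeed d μ →
        0 < μ (‖p‖ ^ 2)) →
      ∀ u : ℝ, 0 < u → ENNReal.ofReal u < maxSpeed d μ →
        deriv (phiMarg d μ) u < 0) ∧
    (∃ C' : ℝ, ∀ u : ℝ, |deriv (phiMarg d μ) u| ≤ C' * |u|) := by
  -- basic numerology
  have hd2 : (2:ℝ) ≤ (d:ℝ) := by exact_mod_cast hd
  set α : ℝ := ((d:ℝ) - 3)/2 with hαdef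
  have hα1 : -1 < α := by rw [hαdef]; linarith
  have hn₁0 : 0 < n₁ := by linarith
  have hαn : α - n₁ < -1 := by rw [hαdef]; linarith
  -- decay bounds for μ and deriv μ
  have hbμ : ∀ e : ℝ, 0 ≤ e → |μ e| ≤ C * (1+e) ^ (-n₁) := fun e he => by
    have := hdecay e he; have := abs_nonneg (deriv μ e); linarith
  have hbμ' : ∀ e : ℝ, 0 ≤ e → |deriv μ e| ≤ C * (1+e) ^ (-n₁) := fun e he => by
    have := hdecay e he; have := abs_nonneg (μ e); linarith
  have hC : 0 ≤ C := by
    have := hbμ 0 le_rfl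
    rw [add_zero, Real.one_rpow] at this
    have h0 : (0:ℝ) ≤ |μ 0| := abs_nonneg _
    linarith
  -- the one-dimensional profile
  set V : ℝ := (volume (Metric.ball (0 : EuclideanSpace ℝ (Fin (d-1))) 1)).toReal with hVdef
  set K : ℝ := ((d:ℝ) - 1) * V * (1/2) with hKdef
  have hV : 0 < V := by
    rw [hVdef]
    refine ENNReal.toReal_pos (ne_of_gt (measure_ball_pos _ _ one_pos)) ?_
    exact (measure_ball_lt_top).ne
  have hK : 0 < K := by
    rw [hKdef]
    have : (0:ℝ) < (d:ℝ) - 1 := by linarith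
    positivity
  set Ψ : ℝ → ℝ := fun s => ∫ t in Ioi (0:ℝ), t ^ α * μ (s + t) with hΨdef
  set D : ℝ → ℝ := fun s => ∫ t in Ioi (0:ℝ), t ^ α * deriv μ (s + t) with hDdef
  have hphi : phiMarg d μ = fun u => K * Ψ (u ^ 2) := by
    funext u
    rw [myPhiEq d hd μ u]
  -- evenness
  have heven : ∀ u : ℝ, phiMarg d μ (-u) = phiMarg d μ u := by
    intro u
    rw [hphi]
    simp [neg_pow]
  -- derivative of Ψ
  have hΨderiv : ∀ s : ℝ, 0 < s → HasDerivAt Ψ (D s) s := fun s hs =>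
    myDeriv hμC1 hα1 hn₁0 hαn hbμ hbμ' hs
  -- derivative of phiMarg at u ≠ 0
  have hphideriv : ∀ u : ℝ, u ≠ 0 → HasDerivAt (phiMarg d μ) (K * (D (u^2) * (2*u))) u := by
    intro u hu
    have hu2 : 0 < u^2 := by positivity
    have h1 : HasDerivAt (fun u : ℝ => u^2) (2*u) u := by
      simpa [mul_comm] using hasDerivAt_pow 2 u
    have h2 : HasDerivAt (Ψ ∘ fun x : ℝ => x ^ 2) (D (u ^ 2) * (2 * u)) u :=
      HasDerivAt.comp_of_eq u (hΨderiv (u ^ 2) hu2) h1 rfl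
    rw [hphi]
    exact h2.const_mul K
  -- deriv at 0 is 0 by evenness
  have h0 : deriv (phiMarg d μ) 0 = 0 := by
    by_cases hdiff : DifferentiableAt ℝ (phiMarg d μ) 0
    · have h1 : HasDerivAt (phiMarg d μ) (deriv (phiMarg d μ) 0) 0 := hdiff.hasDerivAt
      have hneg : HasDerivAt (fun u : ℝ => -u) (-1) (0:ℝ) := hasDerivAt_neg 0
      have h1' : HasDerivAt (phiMarg d μ) (deriv (phiMarg d μ) 0)
          ((fun u : ℝ => -u) 0) := by simpa using h1
      have h2 : HasDerivAt (phiMarg d μ ∘ fun u : ℝ => -u)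
          (deriv (phiMarg d μ) 0 * (-1)) 0 := HasDerivAt.comp 0 h1' hneg
      have h3 : (phiMarg d μ ∘ fun u : ℝ => -u) = phiMarg d μ := funext heven
      rw [h3] at h2
      have := h1.unique h2
      linarith
    · exact deriv_zero_of_not_differentiableAt hdiff
  -- sign of D
  have hDle : ∀ s : ℝ, 0 < s → D s ≤ 0 := by
    intro s hs
    rcases hcase with h3 | ⟨h2, hμ'neg⟩
    · rcases Nat.lt_or_ge d 4 with h4 | h4
      · -- d = 3
        have hd3 : d = 3 := by omega
        have hα0 : α = 0 := by rw [hαdef, hd3]; norm_num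
        have hDs : D s = -μ s := by
          rw [hDdef]
          simp only [hα0, Real.rpow_zero, one_mul]
          exact myFTC hμC1 (by linarith) hbμ hbμ' hs.le
        rw [hDs]
        simpa using hμ0 s hs.le
      · -- d ≥ 4
        have hα0 : 0 < α := by
          have : (4:ℝ) ≤ (d:ℝ) := by exact_mod_cast h4
          rw [hαdef]; linarith
        have hDs : D s = -α * ∫ t in Ioi (0:ℝ), t ^ (α - 1) * μ (s + t) :=
          myIBP hμC1 hα0 (by rw [hαdef]; linarith) hαn hbμ hbμ' hs.le
        rw [hDs]
        have hInn : 0 ≤ ∫ t in Ioi (0:ℝ), t ^ (α - 1) * μ (s + t) := by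
          refine setIntegral_nonneg measurableSet_Ioi fun t ht => ?_
          have ht' := mem_Ioi.mp ht
          exact mul_nonneg (rpow_nonneg ht'.le _) (hμ0 _ (by linarith))
        nlinarith
    · -- d = 2 with deriv μ ≤ 0
      refine integral_nonpos_of_ae ?_
      filter_upwards [ae_restrict_mem measurableSet_Ioi] with t ht
      have ht' := mem_Ioi.mp ht
      exact mul_nonpos_iff.mpr (Or.inl ⟨rpow_nonneg ht'.le α, hμ'neg _ (by linarith)⟩)
  -- strict sign of D
  have hDlt : ∀ s : ℝ, 0 < s → 0 < μ s → D s < 0 := by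
    intro s hs hμs
    rcases hcase with h3 | ⟨h2, hμ'neg⟩
    · rcases Nat.lt_or_ge d 4 with h4 | h4
      · -- d = 3
        have hd3 : d = 3 := by omega
        have hα0 : α = 0 := by rw [hαdef, hd3]; norm_num
        have hDs : D s = -μ s := by
          rw [hDdef]
          simp only [hα0, Real.rpow_zero, one_mul]
          exact myFTC hμC1 (by linarith) hbμ hbμ' hs.le
        rw [hDs]; linarith
      · -- d ≥ 4
        have hα0 : 0 < α := by
          have : (4:ℝ) ≤ (d:ℝ) := by exact_mod_cast h4
          rw [hαdef]; linarith
        have hDs : D s = -α * ∫ t in Ioi (0:ℝ), t ^ (α - 1) * μ (s + t) :=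
          myIBP hμC1 hα0 (by rw [hαdef]; linarith) hαn hbμ hbμ' hs.le
        rw [hDs]
        have hev : ∀ᶠ x in 𝓝 s, 0 < μ x :=
          (hμC1.continuous.tendsto s).eventually (eventually_gt_nhds hμs)
        obtain ⟨ε, hε, hball⟩ := Metric.eventually_nhds_iff.mp hev
        have hInt : IntegrableOn (fun t : ℝ => t ^ (α - 1) * μ (s + t)) (Ioi 0) :=
          myIntShift hμC1.continuous (by linarith) hn₁0 (by linarith) hbμ hs.le
        have hpos : 0 < ∫ t in Ioi (0:ℝ), t ^ (α - 1) * μ (s + t) := by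
          rw [setIntegral_pos_iff_support_of_nonneg_ae ?_ hInt]
          · have hsub : Ioo (0:ℝ) (ε/2) ⊆
                Function.support (fun t : ℝ => t ^ (α - 1) * μ (s + t)) ∩ Ioi 0 := by
              intro t ht
              refine ⟨?_, ht.1⟩
              have h1 : (0:ℝ) < t ^ (α - 1) := rpow_pos_of_pos ht.1 _
              have h2 : 0 < μ (s + t) := by
                refine hball ?_
                rw [Real.dist_eq]
                have : s + t - s = t := by ring
                rw [this, abs_of_pos ht.1]
                linarith [ht.2]
              exact ne_of_gt (mul_pos h1 h2)
            calc (0:ℝ≥0∞) < volume (Ioo (0:ℝ) (ε/2)) := by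
                  rw [Real.volume_Ioo]
                  exact ENNReal.ofReal_pos.mpr (by linarith)
              _ ≤ _ := measure_mono hsub
          · filter_upwards [ae_restrict_mem measurableSet_Ioi] with t ht
            have ht' := mem_Ioi.mp ht
            exact mul_nonneg (rpow_nonneg ht'.le _) (hμ0 _ (by linarith))
        exact mul_neg_of_neg_of_pos (by linarith) hpos
    · -- d = 2
      have hd2' : (d:ℝ) = 2 := by rw [h2]; norm_num
      exact myD2neg hμC1 hα1 (by rw [hαdef, hd2']; norm_num) hn₁0 hαn hbμ hbμ'
        hμ'neg hs.le hμs
  refine ⟨heven, ?_, ?_, ?_⟩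
  · -- monotonicity
    intro u hu
    rcases hu.eq_or_lt with rfl | hu'
    · rw [h0]
    · have hder := (hphideriv u (ne_of_gt hu')).deriv
      rw [hder]
      have hDu := hDle (u^2) (by positivity)
      have h1 : D (u^2) * (2*u) ≤ 0 :=
        mul_nonpos_iff.mpr (Or.inr ⟨hDu, by linarith⟩)
      exact mul_nonpos_iff.mpr (Or.inl ⟨hK.le, h1⟩)
  · -- strict monotonicity
    intro hpos u hu humax
    have hp : 0 < μ (u^2) := by
      set p : EuclideanSpace ℝ (Fin d) :=
        u • (EuclideanSpace.single (⟨0, by omega⟩ : Fin d) (1:ℝ)) with hpdef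
      have hnorm : ‖p‖ = u := by
        rw [hpdef, norm_smul, EuclideanSpace.norm_single]
        simp [abs_of_pos hu]
      have := hpos p (by rw [hnorm]; exact humax)
      rwa [hnorm] at this
    have hder := (hphideriv u (ne_of_gt hu)).deriv
    rw [hder]
    have hDneg := hDlt (u^2) (by positivity) hp
    have h1 : D (u^2) * (2*u) < 0 := mul_neg_of_neg_of_pos hDneg (by linarith)
    exact mul_neg_of_pos_of_neg hK h1
  · -- linear bound on the derivative
    set B : ℝ := ∫ t in Ioi (0:ℝ), t ^ α * (1+t) ^ (-n₁) with hBdef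
    have hB0 : 0 ≤ B := by
      rw [hBdef]
      refine setIntegral_nonneg measurableSet_Ioi fun t ht => ?_
      have ht' := mem_Ioi.mp ht
      exact mul_nonneg (rpow_nonneg ht'.le _) (rpow_nonneg (by linarith) _)
    refine ⟨2 * K * (C * B), fun u => ?_⟩
    rcases eq_or_ne u 0 with rfl | hu
    · simp [h0]
    · have hder := (hphideriv u hu).deriv
      rw [hder]
      have hbound : |D (u^2)| ≤ C * B :=
        myBoundIntegral (hμC1.continuous_deriv le_rfl) hα1 hn₁0 hαn hbμ' (by positivity)
      rw [abs_mul K (D (u^2) * (2*u)), abs_of_pos hK,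
        abs_mul (D (u^2)) (2*u), abs_mul 2 u, abs_two]
      have h1 : |D (u^2)| * (2*|u|) ≤ (C*B) * (2*|u|) :=
        mul_le_mul_of_nonneg_right hbound (by positivity)
      calc K * (|D (u^2)| * (2 * |u|)) ≤ K * ((C*B) * (2*|u|)) :=
            mul_le_mul_of_nonneg_left h1 hK.le
        _ = 2*K*(C*B) * |u| := by ring
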